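/- The number of parking functions of size n whose parking permutation avoids 123, 213, and 231 equals 2n − 1. -/

import Mathlib

open Finset

noncomputable section

/-- The parking process over the first `k` cars (cars are `0,...,k-1`, i.e. cars `1,...,k`
in 1-indexed terms): returns `some occ` where `occ` maps each spot to the car parked there
(`none` meaning empty), or `none` if some car failed to park.  Car `c` drives to its
preferred spot `f c` and parks at the first free spot with index `≥ f c`, failing if
no such spot exists. -/
def parkAux {n : ℕ} (f : Fin n → Fin n) : ℕ → Option (Fin n → Option (Fin n))
  | 0 => some fun _ => none
  | k + 1 =>
    (parkAux f k).bind fun occ =>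
      if h : k < n then
        if hS : (Finset.univ.filter fun s => f ⟨k, h⟩ ≤ s ∧ occ s = none).Nonempty then
          some (Function.update occ
            ((Finset.univ.filter fun s => f ⟨k, h⟩ ≤ s ∧ occ s = none).min' hS)
            (some ⟨k, h⟩))
        else none
      else some occ

/-- All `n` cars park successfully. -/
def AllPark {n : ℕ} (f : Fin n → Fin n) : Prop := (parkAux f n).isSome

/-- `f` is a parking function: for every `i ∈ [n]`, at least `i` cars prefer
the first `i` spots.  (Here `i : Fin n` denotes the `(i+1)`-st spot, 0-indexed.) -/
def IsParkingFunction {n : ℕ} (f : Fin n → Fin n) : Prop :=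
  ∀ i : Fin n, i.val + 1 ≤ (Finset.univ.filter fun j => f j ≤ i).card

/-- `ρ` is the parking permutation of `f`: after all cars have parked,
spot `i` is occupied by car `ρ i`. -/
def IsParkingPerm {n : ℕ} (f : Fin n → Fin n) (ρ : Equiv.Perm (Fin n)) : Prop :=
  parkAux f n = some fun i => some (ρ i)

/-- `π` contains `σ` as a pattern. -/
def ContainsPattern {n m : ℕ} (π : Equiv.Perm (Fin n)) (σ : Equiv.Perm (Fin m)) : Prop :=
  ∃ g : Fin m → Fin n, StrictMono g ∧ ∀ a b : Fin m, σ a < σ b ↔ π (g a) < π (g b)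

/-- `ρ` avoids every pattern in the list `pats`. -/
def AvoidsAll {n : ℕ} (ρ : Equiv.Perm (Fin n)) (pats : List (Equiv.Perm (Fin 3))) : Prop :=
  ∀ σ ∈ pats, ¬ ContainsPattern ρ σ

/-- The number of parking functions of size `n` whose parking permutation avoids
all patterns in `pats`. -/
def pk (n : ℕ) (pats : List (Equiv.Perm (Fin 3))) : ℕ :=
  Nat.card {f : Fin n → Fin n // IsParkingFunction f ∧
    ∃ ρ : Equiv.Perm (Fin n), IsParkingPerm f ρ ∧ AvoidsAll ρ pats}

def p123 : Equiv.Perm (Fin 3) := Equiv.ofBijective ![0, 1, 2] (by decide)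
def p132 : Equiv.Perm (Fin 3) := Equiv.ofBijective ![0, 2, 1] (by decide)
def p213 : Equiv.Perm (Fin 3) := Equiv.ofBijective ![1, 0, 2] (by decide)
def p231 : Equiv.Perm (Fin 3) := Equiv.ofBijective ![1, 2, 0] (by decide)
def p312 : Equiv.Perm (Fin 3) := Equiv.ofBijective ![2, 0, 1] (by decide)
def p321 : Equiv.Perm (Fin 3) := Equiv.ofBijective ![2, 1, 0] (by decide)

def sigmaF (n : ℕ) (j : Fin n) : Fin n → Fin n := fun c =>
  if h0 : c.val = 0 then j
  else if h : c.val ≤ n - 1 - j.val then ⟨n - c.val, by have := j.isLt; have := c.isLt; omega⟩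
  else ⟨n - 1 - c.val, by have := j.isLt; omega⟩

def rhoF (n : ℕ) (j : Fin n) : Fin n → Fin n := fun s =>
  if h0 : s.val = j.val then ⟨0, by have := j.isLt; omega⟩
  else if h : s.val < j.val then ⟨n - 1 - s.val, by have := j.isLt; omega⟩
  else ⟨n - s.val, by have := s.isLt; omega⟩

lemma sigmaF_val (n : ℕ) (j : Fin n) (c : Fin n) :
    (sigmaF n j c).val = if c.val = 0 then j.val else
      if c.val ≤ n - 1 - j.val then n - c.val else n - 1 - c.val := by
  unfold sigmaF; split_ifs <;> rfl

lemma rhoF_val (n : ℕ) (j : Fin n) (s : Fin n) :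
    (rhoF n j s).val = if s.val = j.val then 0 else
      if s.val < j.val then n - 1 - s.val else n - s.val := by
  unfold rhoF; split_ifs <;> rfl

def sigmaE (n : ℕ) (j : Fin n) : Equiv.Perm (Fin n) where
  toFun := sigmaF n j
  invFun := rhoF n j
  left_inv := by
    intro c
    have hj := j.isLt
    have hc := c.isLt
    apply Fin.ext
    rw [rhoF_val, sigmaF_val]
    split_ifs <;> omega
  right_inv := by
    intro s
    have hj := j.isLt
    have hs := s.isLt
    apply Fin.ext
    rw [sigmaF_val, rhoF_val]
    split_ifs <;> omega

lemma card_filter_fin (n : ℕ) (P : ℕ → Prop) [DecidablePred P] :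
    ((univ : Finset (Fin n)).filter fun v => P v.val).card
      = ((Finset.range n).filter P).card := by
  apply Finset.card_nbij (i := fun v => v.val)
  · intro a ha
    simp only [Finset.mem_filter, Finset.mem_range] at *
    simp_all
  · intro a _ b _ h
    exact Fin.ext h
  · intro k hk
    simp only [Finset.coe_filter, Set.mem_setOf_eq, Finset.mem_range] at hk
    exact ⟨⟨k, hk.1⟩, by simp [hk.2], rfl⟩

lemma isPF_of_le {n : ℕ} (f : Fin n → Fin n) (σ : Equiv.Perm (Fin n))
    (h1 : ∀ c, f c ≤ σ c) : IsParkingFunction f := by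
  intro i
  have hsub : (univ.filter fun c => σ c ≤ i) ⊆ (univ.filter fun c => f c ≤ i) := by
    intro c hc
    rw [Finset.mem_filter] at *
    exact ⟨hc.1, le_trans (h1 c) hc.2⟩
  have hcard : (univ.filter fun c => σ c ≤ i).card = (univ.filter fun s : Fin n => s ≤ i).card := by
    apply Finset.card_nbij (i := fun c => σ c)
    · intro a ha
      simp only [Finset.mem_filter] at *
      simp_all
    · intro a _ b _ h
      exact σ.injective h
    · intro s hs
      simp only [Finset.coe_filter, Set.mem_setOf_eq] at hs
      refine ⟨σ.symm s, ?_, by simp⟩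
      simp only [Finset.mem_coe, Finset.mem_filter]
      exact ⟨Finset.mem_univ _, by rw [Equiv.apply_symm_apply]; exact hs.2⟩
  have hIic : (univ.filter fun s : Fin n => s ≤ i) = univ.filter fun s : Fin n => s.val ≤ i.val := by
    ext s; simp only [Finset.mem_filter, Finset.mem_univ, true_and, Fin.le_def]
  have hval : (univ.filter fun s : Fin n => s.val ≤ i.val).card = i.val + 1 := by
    rw [card_filter_fin n (fun v => v ≤ i.val)]
    rw [show (Finset.range n).filter (fun v => v ≤ i.val) = Finset.range (i.val + 1) by
      ext k; simp only [Finset.mem_filter, Finset.mem_range]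
      have := i.isLt; omega]
    rw [Finset.card_range]
  calc i.val + 1 = (univ.filter fun c => σ c ≤ i).card := by rw [hcard, hIic, hval]
  _ ≤ _ := Finset.card_le_card hsub

lemma car_constraint {n : ℕ} (j c : Fin n) (f : Fin n → Fin n)
    (hc1 : f c ≤ sigmaF n j c)
    (hc2 : ∀ s : Fin n, f c ≤ s → s < sigmaF n j c → ((rhoF n j s : Fin n) : ℕ) < (c : ℕ)) :
    f c = sigmaF n j c ∨
      ((c : ℕ) ≠ 0 ∧ (c : ℕ) = n - 1 - (j : ℕ) ∧ ((f c : Fin n) : ℕ) = (j : ℕ)) := by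
  have hjn := j.isLt
  have hcn := c.isLt
  have hfn := (f c).isLt
  have hSval := sigmaF_val n j c
  by_cases hFS : ((f c : Fin n) : ℕ) = ((sigmaF n j c : Fin n) : ℕ)
  · exact Or.inl (Fin.ext hFS)
  have hlt : ((f c : Fin n) : ℕ) < ((sigmaF n j c) : ℕ) :=
    lt_of_le_of_ne (Fin.le_def.mp hc1) hFS
  have h2a := hc2 ⟨((f c : Fin n) : ℕ), hfn⟩ (Fin.le_def.mpr (le_refl _))
    (Fin.lt_def.mpr hlt)
  have h2b := hc2 ⟨((sigmaF n j c : Fin n) : ℕ) - 1, by omega⟩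
    (Fin.le_def.mpr (by simp only [Fin.val_mk]; omega))
    (Fin.lt_def.mpr (by simp only [Fin.val_mk]; omega))
  rw [rhoF_val] at h2a h2b
  simp only [Fin.val_mk] at h2a h2b
  right
  split_ifs at hSval h2a h2b <;> omega

theorem parkAux_spec {n : ℕ} (f : Fin n → Fin n) (σ : Equiv.Perm (Fin n))
    (h1 : ∀ c, f c ≤ σ c)
    (h2 : ∀ (c : Fin n) (s : Fin n), f c ≤ s → s < σ c → (σ.symm s : ℕ) < (c : ℕ)) :
    ∀ k, k ≤ n → parkAux f k =
      some (fun s => if (σ.symm s : ℕ) < k then some (σ.symm s) else none) := by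
  intro k
  induction k with
  | zero => intro _; rw [parkAux]; simp
  | succ k ih =>
    intro hk1
    have hkn : k < n := hk1
    rw [parkAux, ih (le_of_lt hkn)]
    simp only [Option.bind_some]
    rw [dif_pos hkn]
    set ck : Fin n := ⟨k, hkn⟩ with hck
    set S := (Finset.univ.filter fun s => f ck ≤ s ∧
      (if (σ.symm s : ℕ) < k then some (σ.symm s) else none) = none) with hSdef
    have hmem : σ ck ∈ S := by
      rw [hSdef, Finset.mem_filter]
      refine ⟨Finset.mem_univ _, h1 ck, ?_⟩
      rw [if_neg]
      simp [hck]
    have hS : S.Nonempty := ⟨_, hmem⟩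
    rw [dif_pos hS]
    have hmin : S.min' hS = σ ck := by
      apply le_antisymm (Finset.min'_le _ _ hmem)
      rcases lt_or_ge (S.min' hS) (σ ck) with hlt | hge
      · exfalso
        have hm := Finset.mem_filter.mp (S.min'_mem hS)
        have := h2 ck _ hm.2.1 hlt
        rw [if_pos this] at hm
        exact absurd hm.2.2 (by simp)
      · exact hge
    rw [hmin]
    congr 1
    funext s
    rw [Function.update_apply]
    by_cases he : s = σ ck
    · rw [if_pos he]; subst he; simp [hck]
    · rw [if_neg he]
      have hne : (σ.symm s : ℕ) ≠ k := by
        intro h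
        apply he
        calc s = σ (σ.symm s) := (σ.apply_symm_apply s).symm
        _ = σ ck := by rw [Fin.ext (show ((σ.symm s) : ℕ) = (ck : ℕ) from h)]
      split_ifs <;> first | rfl | omega

lemma parkAux_isSome_step {n : ℕ} (f : Fin n → Fin n) (k : ℕ)
    (h : (parkAux f (k+1)).isSome) : (parkAux f k).isSome := by
  rw [parkAux] at h
  cases hk : parkAux f k with
  | none => rw [hk] at h; simp at h
  | some occ => simp

lemma parkAux_isSome_of_le {n : ℕ} (f : Fin n → Fin n) {k m : ℕ} (hkm : k ≤ m)
    (h : (parkAux f m).isSome) : (parkAux f k).isSome := by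
  induction m with
  | zero => simpa [Nat.le_zero.mp hkm] using h
  | succ m ih =>
    rcases Nat.le_succ_iff.mp hkm with h' | h'
    · exact ih h' (parkAux_isSome_step f m h)
    · rwa [h']

lemma parkAux_persist_step {n : ℕ} (f : Fin n → Fin n) (k : ℕ) {o o' : Fin n → Option (Fin n)}
    (hk : parkAux f k = some o) (hk' : parkAux f (k+1) = some o')
    {s : Fin n} {c : Fin n} (h : o s = some c) : o' s = some c := by
  rw [parkAux, hk] at hk'
  simp only [Option.bind_some] at hk'
  split_ifs at hk' with h1 h2
  · cases Option.some_injective _ hk'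
    rw [Function.update_apply]
    split_ifs with he
    · subst he
      have := (Finset.mem_filter.mp ((Finset.filter _ _).min'_mem h2)).2.2
      rw [h] at this; exact absurd this (by simp)
    · exact h
  all_goals first
    | (cases Option.some_injective _ hk'; exact h)
    | exact absurd hk' (by simp)

lemma parkAux_persist {n : ℕ} (f : Fin n → Fin n) {k m : ℕ} (hkm : k ≤ m)
    {o o' : Fin n → Option (Fin n)}
    (hk : parkAux f k = some o) (hm : parkAux f m = some o')
    {s : Fin n} {c : Fin n} (h : o s = some c) : o' s = some c := by
  induction m generalizing o' with
  | zero =>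
    have : k = 0 := Nat.le_zero.mp hkm
    subst this; rw [hk] at hm; cases Option.some_injective _ hm; exact h
  | succ m ih =>
    rcases Nat.le_succ_iff.mp hkm with h' | h'
    · have hsome : (parkAux f m).isSome := parkAux_isSome_step f m (hm ▸ rfl)
      obtain ⟨o'', ho''⟩ := Option.isSome_iff_exists.mp hsome
      exact parkAux_persist_step f m ho'' hm (ih h' ho'')
    · subst h'; rw [hk] at hm; cases Option.some_injective _ hm; exact h

lemma parkAux_car_lt {n : ℕ} (f : Fin n → Fin n) {k : ℕ} {o : Fin n → Option (Fin n)}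
    (hk : parkAux f k = some o) {s c : Fin n} (h : o s = some c) : (c : ℕ) < k := by
  induction k generalizing o with
  | zero =>
    rw [parkAux] at hk; cases Option.some_injective _ hk; simp at h
  | succ k ih =>
    have hsome : (parkAux f k).isSome := parkAux_isSome_step f k (hk ▸ rfl)
    obtain ⟨o'', ho''⟩ := Option.isSome_iff_exists.mp hsome
    rw [parkAux, ho''] at hk
    simp only [Option.bind_some] at hk
    split_ifs at hk with h1 h2
    · cases Option.some_injective _ hk
      rw [Function.update_apply] at h
      split_ifs at h with he
      · cases Option.some_injective _ h; simp
      · exact Nat.lt_succ_of_lt (ih ho'' h)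
    all_goals first
      | (cases Option.some_injective _ hk; exact Nat.lt_succ_of_lt (ih ho'' h))
      | exact absurd hk (by simp)

theorem parkAux_converse {n : ℕ} (f : Fin n → Fin n) (ρ : Equiv.Perm (Fin n))
    (hpark : parkAux f n = some (fun i => some (ρ i))) :
    ∀ c : Fin n, f c ≤ ρ.symm c ∧
      ∀ s : Fin n, f c ≤ s → s < ρ.symm c → (ρ s : ℕ) < (c : ℕ) := by
  intro c
  have hcn : (c : ℕ) < n := c.isLt
  obtain ⟨oc, hoc⟩ := Option.isSome_iff_exists.mp
    (parkAux_isSome_of_le f (le_of_lt hcn) (hpark ▸ rfl))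
  have hsucc : (parkAux f ((c : ℕ) + 1)).isSome :=
    parkAux_isSome_of_le f hcn (hpark ▸ rfl)
  rw [parkAux, hoc] at hsucc
  simp only [Option.bind_some] at hsucc
  rw [dif_pos hcn] at hsucc
  set S := (Finset.univ.filter fun s => f ⟨(c : ℕ), hcn⟩ ≤ s ∧ oc s = none) with hSdef
  have hceta : (⟨(c : ℕ), hcn⟩ : Fin n) = c := Fin.eta c hcn
  by_cases hS : S.Nonempty
  swap
  · rw [dif_neg hS] at hsucc; exact absurd hsucc (by simp)
  rw [dif_pos hS] at hsucc
  have hstep : parkAux f ((c : ℕ) + 1) =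
      some (Function.update oc (S.min' hS) (some ⟨(c : ℕ), hcn⟩)) := by
    rw [parkAux, hoc]
    simp only [Option.bind_some]
    rw [dif_pos hcn, dif_pos hS]
  set m := S.min' hS with hm
  have hmem := Finset.mem_filter.mp (S.min'_mem hS)
  have hupd : Function.update oc m (some ⟨(c : ℕ), hcn⟩) m = some c := by
    rw [Function.update_self, hceta]
  have hfinal : (fun i => some (ρ i)) m = some c :=
    parkAux_persist f (by omega : (c : ℕ) + 1 ≤ n) hstep hpark hupd
  have hρm : ρ m = c := by
    simpa using hfinal
  have hmval : m = ρ.symm c := by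
    rw [← hρm]; simp
  constructor
  · rw [← hmval]; exact hceta ▸ hmem.2.1
  · intro s hfs hslt
    rw [← hmval] at hslt
    have hsnot : s ∉ S := fun hmemS => absurd (Finset.min'_le S s hmemS) (not_le.mpr hslt)
    rw [hSdef, Finset.mem_filter] at hsnot
    push_neg at hsnot
    have hocs : oc s ≠ none := hsnot (Finset.mem_univ s) (by rw [hceta]; exact hfs)
    obtain ⟨c', hc'⟩ := Option.ne_none_iff_exists'.mp hocs
    have hlt := parkAux_car_lt f hoc hc'
    have : (fun i => some (ρ i)) s = some c' :=
      parkAux_persist f (le_of_lt hcn) hoc hpark hc'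
    have : ρ s = c' := by simpa using this
    rw [this]
    exact hlt

lemma strictMono3 {n : ℕ} {x y z : Fin n} (h1 : x < y) (h2 : y < z) :
    StrictMono (![x, y, z] : Fin 3 → Fin n) := by
  intro u v huv
  fin_cases u <;> fin_cases v <;>
    first
      | exact absurd huv (by decide)
      | simpa using h1
      | simpa using h2
      | simpa using h1.trans h2

lemma avoid_descent {n : ℕ} (ρ : Equiv.Perm (Fin n))
    (hA : AvoidsAll ρ [p123, p213, p231]) (j : Fin n) (hj : (ρ j : ℕ) = 0) :
    ∀ a b : Fin n, a < b → a ≠ j → (ρ b : ℕ) < (ρ a : ℕ) := by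
  intro a b hab haj
  by_contra hcon
  have hinj : ρ a ≠ ρ b := fun h => (ne_of_lt hab) (ρ.injective h)
  have hne : (ρ a : ℕ) ≠ (ρ b : ℕ) := fun h => hinj (Fin.ext h)
  have hav : (ρ a : ℕ) < (ρ b : ℕ) := by omega
  have haj' : (ρ a : ℕ) ≠ 0 := by
    intro h; exact haj (ρ.injective (Fin.ext (h.trans hj.symm)))
  have hbj' : (ρ b : ℕ) ≠ 0 := by omega
  have hbj : b ≠ j := fun h =>
    hbj' (by rw [h, hj])
  have h123 := hA p123 (by simp)
  have h213 := hA p213 (by simp)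
  have h231 := hA p231 (by simp)
  rcases lt_trichotomy j a with hja | hja | hja
  · -- j < a < b : pattern 123 at (j, a, b)
    apply h123
    refine ⟨![j, a, b], strictMono3 hja hab, ?_⟩
    intro u v
    rw [p123, Equiv.ofBijective_apply, Equiv.ofBijective_apply]
    fin_cases u <;> fin_cases v <;>
      simp only [Matrix.cons_val_zero, Matrix.cons_val_one, Matrix.head_cons,
        Matrix.cons_val_two, Matrix.tail_cons, Fin.lt_def, Fin.val_zero, Fin.val_one,
        Fin.val_two, Fin.isValue, Fin.zero_eta, Fin.mk_one,
        show (⟨2, by omega⟩ : Fin 3) = 2 from rfl] <;>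
      omega
  · exact absurd hja.symm haj
  · rcases lt_trichotomy j b with hjb | hjb | hjb
    · -- a < j < b : pattern 213 at (a, j, b)
      apply h213
      refine ⟨![a, j, b], strictMono3 hja hjb, ?_⟩
      intro u v
      rw [p213, Equiv.ofBijective_apply, Equiv.ofBijective_apply]
      fin_cases u <;> fin_cases v <;>
        simp only [Matrix.cons_val_zero, Matrix.cons_val_one, Matrix.head_cons,
          Matrix.cons_val_two, Matrix.tail_cons, Fin.lt_def, Fin.val_zero, Fin.val_one,
          Fin.val_two, Fin.isValue, Fin.zero_eta, Fin.mk_one,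
          show (⟨2, by omega⟩ : Fin 3) = 2 from rfl] <;>
        omega
    · exact absurd hjb.symm hbj
    · -- a < b < j : pattern 231 at (a, b, j)
      apply h231
      refine ⟨![a, b, j], strictMono3 hab hjb, ?_⟩
      intro u v
      rw [p231, Equiv.ofBijective_apply, Equiv.ofBijective_apply]
      fin_cases u <;> fin_cases v <;>
        simp only [Matrix.cons_val_zero, Matrix.cons_val_one, Matrix.head_cons,
          Matrix.cons_val_two, Matrix.tail_cons, Fin.lt_def, Fin.val_zero, Fin.val_one,
          Fin.val_two, Fin.isValue, Fin.zero_eta, Fin.mk_one,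
          show (⟨2, by omega⟩ : Fin 3) = 2 from rfl] <;>
        omega

lemma descent_formula {n : ℕ} (ρ : Equiv.Perm (Fin n)) (j : Fin n) (hj : (ρ j : ℕ) = 0)
    (hd : ∀ a b : Fin n, a < b → a ≠ j → (ρ b : ℕ) < (ρ a : ℕ)) (i : Fin n) :
    (ρ i : ℕ) = if i.val = j.val then 0 else
      if i.val < j.val then n - 1 - i.val else n - i.val := by
  have hjn := j.isLt
  have hin := i.isLt
  by_cases hij : i.val = j.val
  · rw [if_pos hij, Fin.ext hij, hj]
  rw [if_neg hij]
  have hρpos : 1 ≤ (ρ i : ℕ) := by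
    rcases Nat.eq_zero_or_pos (ρ i : ℕ) with h | h
    · exact absurd (congrArg Fin.val (ρ.injective (Fin.ext (h.trans hj.symm)))) hij
    · exact h
  -- A : positions after i, ≠ j
  set A := (univ : Finset (Fin n)).filter fun v => i.val < v.val ∧ v.val ≠ j.val with hA
  set B := (univ : Finset (Fin n)).filter fun v => v.val < i.val ∧ v.val ≠ j.val with hB
  set C := (univ : Finset (Fin n)).filter fun w => 1 ≤ w.val ∧ w.val < (ρ i : ℕ) with hC
  set D := (univ : Finset (Fin n)).filter fun w => (ρ i : ℕ) < w.val with hD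
  have hAC : A.card ≤ C.card := by
    apply Finset.card_le_card_of_injOn (fun v => ρ v)
    · intro v hv
      rw [hA, Finset.mem_coe, Finset.mem_filter] at hv
      rw [hC, Finset.mem_coe, Finset.mem_filter]
      have hvj : v ≠ j := fun h => hv.2.2 (congrArg Fin.val h)
      have h1 : (ρ v : ℕ) ≠ 0 := fun h =>
        hvj (ρ.injective (Fin.ext (h.trans hj.symm)))
      have h2 : (ρ v : ℕ) < (ρ i : ℕ) := hd i v (Fin.lt_def.mpr hv.2.1) (fun h => hij (congrArg Fin.val h))
      exact ⟨Finset.mem_univ _, by show 1 ≤ (ρ v : ℕ); omega, h2⟩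
    · intro a _ b _ h
      exact ρ.injective h
  have hBD : B.card ≤ D.card := by
    apply Finset.card_le_card_of_injOn (fun v => ρ v)
    · intro v hv
      rw [hB, Finset.mem_coe, Finset.mem_filter] at hv
      rw [hD, Finset.mem_coe, Finset.mem_filter]
      have hvj : v ≠ j := fun h => hv.2.2 (congrArg Fin.val h)
      exact ⟨Finset.mem_univ _, hd v i (Fin.lt_def.mpr hv.2.1) hvj⟩
    · intro a _ b _ h
      exact ρ.injective h
  have hCcard : C.card = (ρ i : ℕ) - 1 := by
    rw [hC, card_filter_fin n (fun v => 1 ≤ v ∧ v < (ρ i : ℕ))]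
    rw [show ((Finset.range n).filter fun v => 1 ≤ v ∧ v < (ρ i : ℕ)) = Finset.Ico 1 (ρ i : ℕ) by
      ext k; simp only [Finset.mem_filter, Finset.mem_range, Finset.mem_Ico]
      have := (ρ i).isLt; omega]
    rw [Nat.card_Ico]
  have hDcard : D.card = n - 1 - (ρ i : ℕ) := by
    rw [hD, card_filter_fin n (fun v => (ρ i : ℕ) < v)]
    rw [show ((Finset.range n).filter fun v => (ρ i : ℕ) < v) = Finset.Ico ((ρ i : ℕ) + 1) n by
      ext k; simp only [Finset.mem_filter, Finset.mem_range, Finset.mem_Ico]; omega]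
    rw [Nat.card_Ico]
    have := (ρ i).isLt; omega
  have hAcard : A.card = if i.val < j.val then n - i.val - 2 else n - i.val - 1 := by
    rw [hA, card_filter_fin n (fun v => i.val < v ∧ v ≠ j.val)]
    split_ifs with h
    · rw [show ((Finset.range n).filter fun v => i.val < v ∧ v ≠ j.val)
          = (Finset.Ico (i.val + 1) n).erase j.val by
        ext k; simp only [Finset.mem_filter, Finset.mem_range, Finset.mem_erase, Finset.mem_Ico]
        constructor
        · rintro ⟨hk, hk2, hk3⟩; exact ⟨hk3, by omega, hk⟩
        · rintro ⟨hk3, hk2, hk⟩; exact ⟨hk, by omega, hk3⟩]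
      rw [Finset.card_erase_of_mem (by simp only [Finset.mem_Ico]; omega), Nat.card_Ico]
      omega
    · rw [show ((Finset.range n).filter fun v => i.val < v ∧ v ≠ j.val)
          = Finset.Ico (i.val + 1) n by
        ext k; simp only [Finset.mem_filter, Finset.mem_range, Finset.mem_Ico]; omega]
      rw [Nat.card_Ico]; omega
  have hBcard : B.card = if i.val < j.val then i.val else i.val - 1 := by
    rw [hB, card_filter_fin n (fun v => v < i.val ∧ v ≠ j.val)]
    split_ifs with h
    · rw [show ((Finset.range n).filter fun v => v < i.val ∧ v ≠ j.val)
          = Finset.Ico 0 i.val by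
        ext k; simp only [Finset.mem_filter, Finset.mem_range, Finset.mem_Ico]; omega]
      rw [Nat.card_Ico]; omega
    · rw [show ((Finset.range n).filter fun v => v < i.val ∧ v ≠ j.val)
          = (Finset.Ico 0 i.val).erase j.val by
        ext k; simp only [Finset.mem_filter, Finset.mem_range, Finset.mem_erase, Finset.mem_Ico]
        constructor
        · rintro ⟨hk, hk2, hk3⟩; exact ⟨hk3, by omega, hk2⟩
        · rintro ⟨hk3, hk2, hk⟩; exact ⟨by omega, hk, hk3⟩]
      rw [Finset.card_erase_of_mem (by simp only [Finset.mem_Ico]; omega), Nat.card_Ico]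
      omega
  split_ifs at hAcard hBcard ⊢ <;> omega

lemma avoids_of_descent {n : ℕ} (ρ : Equiv.Perm (Fin n)) (j : Fin n) (hj : (ρ j : ℕ) = 0)
    (hd : ∀ a b : Fin n, a < b → a ≠ j → (ρ b : ℕ) < (ρ a : ℕ)) :
    AvoidsAll ρ [p123, p213, p231] := by
  have key : ∀ a b : Fin n, a < b → ρ a < ρ b → a = j := by
    intro a b hab hρ
    by_contra h
    exact absurd (Fin.lt_def.mpr (hd a b hab h)) (not_lt.mpr (le_of_lt hρ))
  intro σ hσ ⟨g, hg, hiff⟩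
  have g01 : g 0 < g 1 := hg (by decide)
  have g12 : g 1 < g 2 := hg (by decide)
  have g02 : g 0 < g 2 := hg (by decide)
  simp only [List.mem_cons, List.not_mem_nil, or_false] at hσ
  rcases hσ with h | h | h <;> subst h
  · -- p123 : ascents (0,1) and (1,2)
    have a1 : ρ (g 0) < ρ (g 1) := (hiff 0 1).mp (by
      rw [p123, Equiv.ofBijective_apply, Equiv.ofBijective_apply]; decide)
    have a2 : ρ (g 1) < ρ (g 2) := (hiff 1 2).mp (by
      rw [p123, Equiv.ofBijective_apply, Equiv.ofBijective_apply]; decide)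
    have e1 := key _ _ g01 a1
    have e2 := key _ _ g12 a2
    exact absurd (e1.trans e2.symm) (ne_of_lt g01)
  · -- p213 : ascents (1,2) and (0,2)
    have a1 : ρ (g 1) < ρ (g 2) := (hiff 1 2).mp (by
      rw [p213, Equiv.ofBijective_apply, Equiv.ofBijective_apply]; decide)
    have a2 : ρ (g 0) < ρ (g 2) := (hiff 0 2).mp (by
      rw [p213, Equiv.ofBijective_apply, Equiv.ofBijective_apply]; decide)
    have e1 := key _ _ g12 a1
    have e2 := key _ _ g02 a2
    exact absurd (e2.trans e1.symm) (ne_of_lt g01)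
  · -- p231 : ascent (0,1), and ρ (g 2) < ρ (g 0)
    have a1 : ρ (g 0) < ρ (g 1) := (hiff 0 1).mp (by
      rw [p231, Equiv.ofBijective_apply, Equiv.ofBijective_apply]; decide)
    have a2 : ρ (g 2) < ρ (g 0) := (hiff 2 0).mp (by
      rw [p231, Equiv.ofBijective_apply, Equiv.ofBijective_apply]; decide)
    have e1 := key _ _ g01 a1
    rw [e1] at a2
    have : (ρ (g 2) : ℕ) < 0 := by
      have := Fin.lt_def.mp a2; omega
    omega

set_option maxHeartbeats 1000000

def hhF (n : ℕ) (j : Fin n) : Fin n → Fin n :=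
  Function.update (sigmaF n j) ⟨n - 1 - j.val, by have := j.isLt; omega⟩ j

lemma sigmaF_zero (n : ℕ) (j : Fin n) (h : 0 < n) : sigmaF n j ⟨0, h⟩ = j := by
  unfold sigmaF
  rw [dif_pos rfl]

lemma rhoF_descent (n : ℕ) (j : Fin n) :
    ∀ a b : Fin n, a < b → a ≠ j → ((rhoF n j b : Fin n) : ℕ) < ((rhoF n j a : Fin n) : ℕ) := by
  intro a b hab haj
  rw [rhoF_val, rhoF_val]
  have h1 : a.val ≠ j.val := fun h => haj (Fin.ext h)
  have h2 := Fin.lt_def.mp hab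
  have := a.isLt; have := b.isLt; have := j.isLt
  split_ifs <;> omega

lemma P_gg (n : ℕ) (j : Fin n) : IsParkingFunction (sigmaF n j) ∧
    ∃ ρ : Equiv.Perm (Fin n), IsParkingPerm (sigmaF n j) ρ ∧ AvoidsAll ρ [p123, p213, p231] := by
  have h1 : ∀ c, sigmaF n j c ≤ (sigmaE n j) c := fun c => le_refl _
  have h2 : ∀ (c s : Fin n), sigmaF n j c ≤ s → s < (sigmaE n j) c →
      (((sigmaE n j).symm s : Fin n) : ℕ) < (c : ℕ) := by
    intro c s hle hlt
    exact absurd (lt_of_le_of_lt hle hlt) (lt_irrefl _)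
  refine ⟨isPF_of_le _ (sigmaE n j) h1, (sigmaE n j).symm, ?_, ?_⟩
  · unfold IsParkingPerm
    rw [parkAux_spec (sigmaF n j) (sigmaE n j) h1 h2 n le_rfl]
    congr 1
    funext s
    rw [if_pos (((sigmaE n j).symm s).isLt)]
  · apply avoids_of_descent _ j
    · show ((rhoF n j j : Fin n) : ℕ) = 0
      rw [rhoF_val, if_pos rfl]
    · intro a b hab haj
      exact rhoF_descent n j a b hab haj

lemma sigmaF_at_c0 (n : ℕ) (j : Fin n) (hj : (j : ℕ) < n - 1) :
    ((sigmaF n j ⟨n - 1 - j.val, by have := j.isLt; omega⟩ : Fin n) : ℕ) = (j : ℕ) + 1 := by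
  have hjn := j.isLt
  rw [sigmaF_val]
  simp only [Fin.val_mk]
  rw [if_neg (by omega), if_pos (by omega)]
  omega

lemma P_hh (n : ℕ) (j : Fin n) (hj : (j : ℕ) < n - 1) : IsParkingFunction (hhF n j) ∧
    ∃ ρ : Equiv.Perm (Fin n), IsParkingPerm (hhF n j) ρ ∧ AvoidsAll ρ [p123, p213, p231] := by
  have hjn := j.isLt
  set c0 : Fin n := ⟨n - 1 - j.val, by omega⟩ with hc0
  have hσc0 : ((sigmaF n j c0 : Fin n) : ℕ) = (j : ℕ) + 1 := sigmaF_at_c0 n j hj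
  have h1 : ∀ c, hhF n j c ≤ (sigmaE n j) c := by
    intro c
    unfold hhF
    rw [Function.update_apply]
    split_ifs with he
    · subst he
      show j ≤ sigmaF n j c0
      rw [Fin.le_def, hσc0]
      omega
    · exact le_refl _
  have h2 : ∀ (c s : Fin n), hhF n j c ≤ s → s < (sigmaE n j) c →
      (((sigmaE n j).symm s : Fin n) : ℕ) < (c : ℕ) := by
    intro c s hle hlt
    unfold hhF at hle
    rw [Function.update_apply] at hle
    split_ifs at hle with he
    · subst he
      have hs1 : (j : ℕ) ≤ (s : ℕ) := Fin.le_def.mp hle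
      have hs2 : (s : ℕ) < (j : ℕ) + 1 := by
        have := Fin.lt_def.mp hlt
        rw [show ((sigmaE n j) c0 : ℕ) = ((sigmaF n j c0 : Fin n) : ℕ) from rfl, hσc0] at this
        exact this
      have hsj : s = j := Fin.ext (by omega)
      show ((rhoF n j s : Fin n) : ℕ) < (c0 : ℕ)
      rw [hsj, rhoF_val, if_pos rfl]
      show 0 < n - 1 - j.val
      omega
    · exact absurd (lt_of_le_of_lt hle hlt) (lt_irrefl _)
  refine ⟨isPF_of_le _ (sigmaE n j) h1, (sigmaE n j).symm, ?_, ?_⟩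
  · unfold IsParkingPerm
    rw [parkAux_spec (hhF n j) (sigmaE n j) h1 h2 n le_rfl]
    congr 1
    funext s
    rw [if_pos (((sigmaE n j).symm s).isLt)]
  · apply avoids_of_descent _ j
    · show ((rhoF n j j : Fin n) : ℕ) = 0
      rw [rhoF_val, if_pos rfl]
    · exact rhoF_descent n j

lemma P_backward {n : ℕ} (hn : 1 ≤ n) (f : Fin n → Fin n) (ρ : Equiv.Perm (Fin n))
    (hpp : IsParkingPerm f ρ) (hA : AvoidsAll ρ [p123, p213, p231]) :
    (∃ j, f = sigmaF n j) ∨ (∃ j : Fin n, (j : ℕ) < n - 1 ∧ f = hhF n j) := by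
  set j := ρ.symm ⟨0, hn⟩ with hjdef
  have hj : ((ρ j : Fin n) : ℕ) = 0 := by
    rw [hjdef, Equiv.apply_symm_apply]
  have hd := avoid_descent ρ hA j hj
  have hform := descent_formula ρ j hj hd
  have hρeq : ∀ i, ρ i = rhoF n j i := by
    intro i
    apply Fin.ext
    rw [hform i, rhoF_val]
  have hEq : ρ = (sigmaE n j).symm := Equiv.ext (fun i => hρeq i)
  have hsymm : ∀ c, ρ.symm c = sigmaF n j c := by
    intro c
    rw [hEq, Equiv.symm_symm]
    rfl
  have hconv := parkAux_converse f ρ hpp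
  have hcc : ∀ c, f c = sigmaF n j c ∨
      ((c : ℕ) ≠ 0 ∧ (c : ℕ) = n - 1 - (j : ℕ) ∧ ((f c : Fin n) : ℕ) = (j : ℕ)) := by
    intro c
    obtain ⟨h1, h2⟩ := hconv c
    rw [hsymm c] at h1
    apply car_constraint j c f h1
    intro s hs1 hs2
    have hres := h2 s hs1 (by rw [hsymm c]; exact hs2)
    rw [hρeq s] at hres
    exact hres
  by_cases hall : ∀ c, f c = sigmaF n j c
  · exact Or.inl ⟨j, funext hall⟩
  · push_neg at hall
    obtain ⟨c, hc⟩ := hall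
    obtain h | h := hcc c
    · exact absurd h hc
    have hjn := j.isLt
    have hcn := c.isLt
    right
    refine ⟨j, by omega, ?_⟩
    funext c'
    unfold hhF
    rw [Function.update_apply]
    split_ifs with he
    · have hcc' : c' = c := by
        apply Fin.ext
        rw [congrArg Fin.val he]
        simp only [Fin.val_mk]
        omega
      rw [hcc']
      exact Fin.ext h.2.2
    · obtain h' | h' := hcc c'
      · exact h'
      · exfalso
        apply he
        apply Fin.ext
        simp only [Fin.val_mk]
        omega

theorem stmt8 (n : ℕ) (hn : 1 ≤ n) :
    pk n [p123, p213, p231] = 2 * n - 1 := by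
  classical
  set pats := [p123, p213, p231] with hpats
  set T : Finset (Fin n → Fin n) :=
    ((univ : Finset (Fin n)).image fun j => sigmaF n j) ∪
      (((univ : Finset (Fin n)).filter fun j : Fin n => (j : ℕ) < n - 1).image fun j => hhF n j) with hT
  have key : ∀ f : Fin n → Fin n,
      (IsParkingFunction f ∧ ∃ ρ : Equiv.Perm (Fin n), IsParkingPerm f ρ ∧ AvoidsAll ρ pats)
        ↔ f ∈ T := by
    intro f
    constructor
    · rintro ⟨hpf, ρ, hpp, hA⟩
      rcases P_backward hn f ρ hpp hA with ⟨j, rfl⟩ | ⟨j, hj, rfl⟩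
      · exact Finset.mem_union_left _ (Finset.mem_image_of_mem _ (Finset.mem_univ j))
      · exact Finset.mem_union_right _
          (Finset.mem_image_of_mem _ (Finset.mem_filter.mpr ⟨Finset.mem_univ j, hj⟩))
    · intro hf
      rcases Finset.mem_union.mp hf with h | h
      · obtain ⟨j, _, rfl⟩ := Finset.mem_image.mp h
        exact P_gg n j
      · obtain ⟨j, hj, rfl⟩ := Finset.mem_image.mp h
        exact P_hh n j (Finset.mem_filter.mp hj).2
  have hcongr : pk n pats = T.card := by
    unfold pk
    rw [← Nat.card_eq_finsetCard T]
    exact Nat.card_congr (Equiv.subtypeEquivRight key)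
  rw [hcongr]
  -- cardinality computation
  have hzero : (0 : ℕ) < n := hn
  have hinj1 : Set.InjOn (fun j => sigmaF n j) (univ : Finset (Fin n)) := by
    intro a _ b _ h
    have := congrFun h ⟨0, hzero⟩
    simp only at this
    rwa [sigmaF_zero n a hzero, sigmaF_zero n b hzero] at this
  have hhF_zero : ∀ j : Fin n, (j : ℕ) < n - 1 → hhF n j ⟨0, hzero⟩ = j := by
    intro j hj
    have hjn := j.isLt
    unfold hhF
    rw [Function.update_apply, if_neg (by
      intro h
      have := congrArg Fin.val h
      simp only [Fin.val_mk] at this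
      omega)]
    exact sigmaF_zero n j hzero
  have hinj2 : Set.InjOn (fun j => hhF n j)
      ((univ : Finset (Fin n)).filter fun j : Fin n => (j : ℕ) < n - 1) := by
    intro a ha b hb h
    simp only [Finset.coe_filter, Set.mem_setOf_eq] at ha hb
    have := congrFun h ⟨0, hzero⟩
    simp only at this
    rwa [hhF_zero a ha.2, hhF_zero b hb.2] at this
  have hdisj : Disjoint ((univ : Finset (Fin n)).image fun j => sigmaF n j)
      (((univ : Finset (Fin n)).filter fun j : Fin n => (j : ℕ) < n - 1).image fun j => hhF n j) := by
    rw [Finset.disjoint_left]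
    intro x hx1 hx2
    obtain ⟨j1, _, h1⟩ := Finset.mem_image.mp hx1
    obtain ⟨j2, hj2, h2⟩ := Finset.mem_image.mp hx2
    have hj2' := (Finset.mem_filter.mp hj2).2
    have hje : j1 = j2 := by
      have e1 : x ⟨0, hzero⟩ = j1 := by rw [← h1]; exact sigmaF_zero n j1 hzero
      have e2 : x ⟨0, hzero⟩ = j2 := by rw [← h2]; exact hhF_zero j2 hj2'
      rw [← e1, ← e2]
    subst hje
    have hjn := j1.isLt
    set c0 : Fin n := ⟨n - 1 - j1.val, by omega⟩ with hc0
    have e1 : ((x c0 : Fin n) : ℕ) = (j1 : ℕ) + 1 := by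
      rw [← h1]; exact sigmaF_at_c0 n j1 hj2'
    have e2 : ((x c0 : Fin n) : ℕ) = (j1 : ℕ) := by
      rw [← h2]
      unfold hhF
      rw [Function.update_self]
    omega
  rw [hT, Finset.card_union_of_disjoint hdisj,
    Finset.card_image_of_injOn hinj1, Finset.card_image_of_injOn hinj2,
    Finset.card_univ, Fintype.card_fin]
  have hfc : ((univ : Finset (Fin n)).filter fun j : Fin n => (j : ℕ) < n - 1).card = n - 1 := by
    rw [card_filter_fin n (fun v => v < n - 1)]
    rw [show (Finset.range n).filter (fun v => v < n - 1) = Finset.range (n - 1) by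
      ext k
      simp only [Finset.mem_filter, Finset.mem_range]
      omega]
    rw [Finset.card_range]
  rw [hfc]
  omega
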